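/- For integers m ≥ 2 and 1 ≤ k ≤ m-1, assuming Gauss' digamma theorem, ∑_{r=1}^{m-1} ψ(r/m)·cos(2πrk/m) = m·ln(2·sin(kπ/m)) + γ. -/

import Mathlib

open Real Finset


lemma cosSum_range (m : ℕ) (hm : 1 ≤ m) (n : ℤ) (h : ¬ (m:ℤ) ∣ n) :
    ∑ r ∈ Finset.range m, Real.cos (2*π*n*r/m) = 0 := by
  have hm0 : (m:ℝ) ≠ 0 := by positivity
  have hmC : (m:ℂ) ≠ 0 := Nat.cast_ne_zero.mpr (by omega)
  have hπ : (π:ℝ) ≠ 0 := Real.pi_ne_zero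
  set θ : ℝ := 2*π*n/m with hθ
  set ζ : ℂ := Complex.exp (θ * Complex.I) with hζ
  have hζ1 : ζ ≠ 1 := by
    intro hc
    rw [hζ, Complex.exp_eq_one_iff] at hc
    obtain ⟨j, hj⟩ := hc
    have h2 : (θ:ℂ) = ((j * (2*π) : ℝ) : ℂ) := by
      apply mul_right_cancel₀ Complex.I_ne_zero
      rw [hj]; push_cast; ring
    have h3 : θ = j * (2*π) := by exact_mod_cast h2
    rw [hθ] at h3
    have h4 : (n:ℝ) = (j * m : ℤ) := by
      field_simp at h3
      push_cast
      nlinarith [Real.pi_pos, h3]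
    have h5 : n = j * m := by exact_mod_cast h4
    exact h ⟨j, by linarith [h5]⟩
  have hζm : ζ ^ m = 1 := by
    rw [hζ, ← Complex.exp_nat_mul]
    have : (m:ℂ) * (θ * Complex.I) = (n:ℤ) * (2*π*Complex.I) := by
      rw [hθ]
      have : ((2*π*n/m : ℝ) : ℂ) = 2*π*n/m := by push_cast; ring
      rw [this]
      field_simp
    rw [this, Complex.exp_int_mul_two_pi_mul_I]
  have hgeom : ∑ r ∈ Finset.range m, ζ ^ r = 0 := by
    rw [geom_sum_eq hζ1, hζm, sub_self, zero_div]
  have hre : ∀ r : ℕ, Real.cos (2*π*n*r/m) = (ζ ^ r).re := by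
    intro r
    rw [hζ, ← Complex.exp_nat_mul]
    have : (r:ℂ) * (θ * Complex.I) = ((θ * r : ℝ) : ℂ) * Complex.I := by push_cast; ring
    rw [this, Complex.exp_ofReal_mul_I_re, hθ]
    ring_nf
  calc ∑ r ∈ Finset.range m, Real.cos (2*π*n*r/m) = ∑ r ∈ Finset.range m, (ζ ^ r).re :=
        Finset.sum_congr rfl fun r _ => hre r
    _ = (∑ r ∈ Finset.range m, ζ ^ r).re := by rw [Complex.re_sum]
    _ = 0 := by rw [hgeom]; simp

lemma range_eq_insert_Icc (m : ℕ) (hm : 2 ≤ m) :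
    Finset.range m = insert 0 (Finset.Icc 1 (m-1)) := by
  ext x; simp only [Finset.mem_range, Finset.mem_insert, Finset.mem_Icc]; omega

lemma cosSum_Icc_not (m : ℕ) (hm : 2 ≤ m) (n : ℤ) (h : ¬ (m:ℤ) ∣ n) :
    ∑ r ∈ Finset.Icc 1 (m-1), Real.cos (2*π*n*r/m) = -1 := by
  have h0 : (0:ℕ) ∉ Finset.Icc 1 (m-1) := by simp
  have := cosSum_range m (by omega) n h
  rw [range_eq_insert_Icc m hm, Finset.sum_insert h0] at this
  simp only [Nat.cast_zero, mul_zero, zero_div, Real.cos_zero] at this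
  linarith

lemma cosSum_Icc_dvd (m : ℕ) (hm : 2 ≤ m) (n : ℤ) (h : (m:ℤ) ∣ n) :
    ∑ r ∈ Finset.Icc 1 (m-1), Real.cos (2*π*n*r/m) = m - 1 := by
  obtain ⟨j, rfl⟩ := h
  have hm0 : (m:ℝ) ≠ 0 := by positivity
  push_cast
  have h1 : ∀ r ∈ Finset.Icc 1 (m-1), Real.cos (2*π*((m:ℝ)*(j:ℝ))*r/m) = 1 := by
    intro r _
    have h2 : (2*π*((m:ℝ)*(j:ℝ))*r/m) = ((j*r : ℤ):ℝ) * (2*π) := by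
      push_cast; field_simp
    rw [h2, Real.cos_int_mul_two_pi]
  rw [Finset.sum_congr rfl h1, Finset.sum_const, Nat.card_Icc]
  simp only [nsmul_eq_mul, mul_one]
  have h3 : m - 1 + 1 - 1 = m - 1 := by omega
  rw [h3, Nat.cast_sub (by omega)]
  simp

lemma cotSum (m k : ℕ) (hm : 2 ≤ m) :
    ∑ r ∈ Finset.Icc 1 (m-1), Real.cot (π*r/m) * Real.cos (2*π*r*k/m) = 0 := by
  have hm0 : (m:ℝ) ≠ 0 := by positivity
  have key : ∑ r ∈ Finset.Icc 1 (m-1), Real.cot (π*r/m) * Real.cos (2*π*r*k/m)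
      = ∑ r ∈ Finset.Icc 1 (m-1), -(Real.cot (π*r/m) * Real.cos (2*π*r*k/m)) := by
    apply Finset.sum_nbij' (i := fun r => m - r) (j := fun r => m - r)
    · intro a ha; simp only [Finset.mem_Icc] at *; omega
    · intro a ha; simp only [Finset.mem_Icc] at *; omega
    · intro a ha; simp only [Finset.mem_Icc] at *; omega
    · intro a ha; simp only [Finset.mem_Icc] at *; omega
    · intro a ha
      simp only [Finset.mem_Icc] at ha
      have hcast : ((m - a : ℕ) : ℝ) = m - a := by
        rw [Nat.cast_sub (by omega)]
      rw [hcast]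
      have h1 : π * ((m:ℝ) - a) / m = π - π * a / m := by field_simp
      have h2 : 2*π*((m:ℝ) - a)*k/m = (k:ℕ) * (2*π) - 2*π*a*k/m := by field_simp
      rw [h1, h2, Real.cos_nat_mul_two_pi_sub]
      have h3 : Real.cot (π - π * a / m) = -Real.cot (π * a / m) := by
        rw [Real.cot_eq_cos_div_sin, Real.cot_eq_cos_div_sin, Real.cos_pi_sub, Real.sin_pi_sub,
          neg_div]
      rw [h3]
      ring
  have := key
  rw [Finset.sum_neg_distrib] at this
  linarith

lemma prod_one_sub_zeta (m : ℕ) (hm : 2 ≤ m) :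
    ∏ l ∈ Finset.Icc 1 (m-1), (1 - Complex.exp (2*π*Complex.I/m) ^ l) = (m : ℂ) := by
  set ζ : ℂ := Complex.exp (2*π*Complex.I/m) with hζ
  have hprim : IsPrimitiveRoot ζ m := Complex.isPrimitiveRoot_exp m (by omega)
  have hpoly : (Polynomial.X ^ m - Polynomial.C (1:ℂ))
      = ∏ i ∈ Finset.range m, (Polynomial.X - Polynomial.C (ζ ^ i * 1)) :=
    X_pow_sub_C_eq_prod hprim (by omega) (one_pow m)
  have h0 : (0:ℕ) ∉ Finset.Icc 1 (m-1) := by simp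
  rw [range_eq_insert_Icc m hm, Finset.prod_insert h0] at hpoly
  simp only [pow_zero, one_mul, mul_one] at hpoly
  have hgeom : (Polynomial.X ^ m - Polynomial.C (1:ℂ))
      = (Polynomial.X - Polynomial.C 1) * ∑ i ∈ Finset.range m, Polynomial.X ^ i := by
    rw [Polynomial.C_1, mul_comm, geom_sum_mul]
  rw [hgeom] at hpoly
  have hcancel : (∑ i ∈ Finset.range m, (Polynomial.X : Polynomial ℂ) ^ i)
      = ∏ i ∈ Finset.Icc 1 (m-1), (Polynomial.X - Polynomial.C (ζ ^ i)) := by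
    have hX1 : (Polynomial.X - Polynomial.C (1:ℂ)) ≠ 0 := Polynomial.X_sub_C_ne_zero 1
    exact mul_left_cancel₀ hX1 hpoly
  have := congrArg (Polynomial.eval 1) hcancel
  simp only [Polynomial.eval_finset_sum, Polynomial.eval_pow, Polynomial.eval_X, one_pow,
    Polynomial.eval_prod, Polynomial.eval_sub, Polynomial.eval_C] at this
  rw [Finset.sum_const, Finset.card_range, nsmul_eq_mul, mul_one] at this
  exact this.symm

lemma prod_two_sin (m : ℕ) (hm : 2 ≤ m) :
    ∏ l ∈ Finset.Icc 1 (m-1), (2 * Real.sin (π * l / m)) = m := by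
  have hm0 : (m:ℝ) ≠ 0 := by positivity
  have habs : ∀ l ∈ Finset.Icc 1 (m-1),
      ‖1 - Complex.exp (2*π*Complex.I/m) ^ l‖ = 2 * Real.sin (π * l / m) := by
    intro l hl
    simp only [Finset.mem_Icc] at hl
    have hl1 : (1:ℝ) ≤ l := by exact_mod_cast hl.1
    have hlm : (l:ℝ) ≤ m - 1 := by
      have : (l:ℝ) ≤ (m-1 : ℕ) := by exact_mod_cast hl.2
      rwa [Nat.cast_sub (by omega), Nat.cast_one] at this
    have hpos := Real.pi_pos
    have hmpos : (0:ℝ) < m := by positivity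
    set x : ℝ := 2 * π * l / m with hx
    have h1 : Complex.exp (2*π*Complex.I/m) ^ l = Complex.exp ((x:ℝ) * Complex.I) := by
      rw [← Complex.exp_nat_mul]
      congr 1
      rw [hx]
      push_cast
      have : (m:ℂ) ≠ 0 := Nat.cast_ne_zero.mpr (by omega)
      field_simp
    rw [h1]
    have h2 : (1 : ℂ) - Complex.exp ((x:ℝ) * Complex.I)
        = ((1 - Real.cos x : ℝ) : ℂ) + ((-Real.sin x : ℝ) : ℝ) * Complex.I := by
      rw [Complex.exp_mul_I]
      push_cast
      ring
    rw [h2]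
    have h3 := Complex.normSq_add_mul_I (1 - Real.cos x) (-Real.sin x)
    have habs2 : (‖((1 - Real.cos x : ℝ) : ℂ) + ((-Real.sin x : ℝ) : ℝ) * Complex.I‖)^2
        = (1 - Real.cos x)^2 + (-Real.sin x)^2 := by
      rw [Complex.sq_norm]
      exact_mod_cast h3
    have hhalf : x / 2 = π * l / m := by rw [hx]; ring
    have hsinpos : 0 ≤ Real.sin (π * l / m) := by
      apply Real.sin_nonneg_of_nonneg_of_le_pi
      · positivity
      · rw [div_le_iff₀ hmpos]; nlinarith
    have hcosid : Real.cos x = 1 - 2 * Real.sin (x/2)^2 := by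
      have h10 := Real.cos_sq (x/2)
      have h11 : 2*(x/2) = x := by ring
      rw [h11] at h10
      have h12 := Real.sin_sq_add_cos_sq (x/2)
      linarith
    have htarget : (1 - Real.cos x)^2 + (-Real.sin x)^2 = (2 * Real.sin (π * l / m))^2 := by
      have hsinx : Real.sin x ^ 2 = 1 - Real.cos x ^ 2 := Real.sin_sq x
      rw [← hhalf]
      nlinarith [hsinx, hcosid]
    have hboth : (‖((1 - Real.cos x : ℝ) : ℂ) + ((-Real.sin x : ℝ) : ℝ) * Complex.I‖)^2
        = (2 * Real.sin (π * l / m))^2 := by rw [habs2, htarget]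
    have h7 : (0:ℝ) ≤ 2 * Real.sin (π * l / m) := by linarith
    have h8 : (0:ℝ) ≤ ‖((1 - Real.cos x : ℝ) : ℂ) + ((-Real.sin x : ℝ) : ℝ) * Complex.I‖ :=
      norm_nonneg _
    nlinarith [hboth, h7, h8]
  calc ∏ l ∈ Finset.Icc 1 (m-1), (2 * Real.sin (π * l / m))
      = ∏ l ∈ Finset.Icc 1 (m-1), ‖1 - Complex.exp (2*π*Complex.I/m) ^ l‖ :=
        (Finset.prod_congr rfl habs).symm
    _ = ‖∏ l ∈ Finset.Icc 1 (m-1), (1 - Complex.exp (2*π*Complex.I/m) ^ l)‖ := by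
        rw [norm_prod]
    _ = m := by rw [prod_one_sub_zeta m hm]; simp

lemma sin_pos_aux (m l : ℕ) (hm : 2 ≤ m) (hl1 : 1 ≤ l) (hl2 : l ≤ m - 1) :
    0 < Real.sin (π * l / m) := by
  have hpi := Real.pi_pos
  have hmpos : (0:ℝ) < m := by positivity
  have hl1' : (1:ℝ) ≤ l := by exact_mod_cast hl1
  have hlm : (l:ℝ) < m := by
    have : l < m := by omega
    exact_mod_cast this
  apply Real.sin_pos_of_pos_of_lt_pi
  · apply div_pos (by nlinarith) hmpos
  · rw [div_lt_iff₀ hmpos]; nlinarith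

lemma sum_log_sin (m : ℕ) (hm : 2 ≤ m) :
    ∑ l ∈ Finset.Icc 1 (m-1), Real.log (Real.sin (π * l / m))
      = Real.log m - (m-1 : ℕ) * Real.log 2 := by
  have hprod := prod_two_sin m hm
  have hne : ∀ l ∈ Finset.Icc 1 (m-1), 2 * Real.sin (π * l / m) ≠ 0 := by
    intro l hl
    simp only [Finset.mem_Icc] at hl
    have := sin_pos_aux m l hm hl.1 hl.2
    positivity
  have hlog := congrArg Real.log hprod
  rw [Real.log_prod hne] at hlog
  have hsplit : ∀ l ∈ Finset.Icc 1 (m-1),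
      Real.log (2 * Real.sin (π * l / m)) = Real.log 2 + Real.log (Real.sin (π * l / m)) := by
    intro l hl
    simp only [Finset.mem_Icc] at hl
    have := sin_pos_aux m l hm hl.1 hl.2
    rw [Real.log_mul (by norm_num) (by positivity)]
  rw [Finset.sum_congr rfl hsplit, Finset.sum_add_distrib, Finset.sum_const, Nat.card_Icc] at hlog
  have hc : m - 1 + 1 - 1 = m - 1 := by omega
  rw [hc, nsmul_eq_mul] at hlog
  linarith

lemma Slem (m k l : ℕ) (hm : 2 ≤ m) (hk1 : 1 ≤ k) (hk2 : k ≤ m - 1)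
    (hl1 : 1 ≤ l) (hl2 : l ≤ m - 1) :
    ∑ r ∈ Finset.Icc 1 (m-1), Real.cos (2*π*r*k/m) * Real.cos (2*π*r*l/m)
      = -1 + (m/2 : ℝ) * (if l = k then 1 else 0) + (m/2 : ℝ) * (if l = m - k then 1 else 0) := by
  have hm0 : (m:ℝ) ≠ 0 := by positivity
  set n₁ : ℤ := (k:ℤ) - l with hn₁
  set n₂ : ℤ := (k:ℤ) + l with hn₂
  have hterm : ∀ r ∈ Finset.Icc 1 (m-1),
      Real.cos (2*π*r*k/m) * Real.cos (2*π*r*l/m)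
        = (Real.cos (2*π*(n₁:ℝ)*r/m) + Real.cos (2*π*(n₂:ℝ)*r/m)) / 2 := by
    intro r _
    have h1 := Real.two_mul_cos_mul_cos (2*π*r*k/m) (2*π*r*l/m)
    have h2 : 2*π*r*(k:ℝ)/m - 2*π*r*l/m = 2*π*(n₁:ℝ)*r/m := by
      rw [hn₁]; push_cast; field_simp
    have h3 : 2*π*r*(k:ℝ)/m + 2*π*r*l/m = 2*π*(n₂:ℝ)*r/m := by
      rw [hn₂]; push_cast; field_simp
    rw [h2, h3] at h1
    linarith
  rw [Finset.sum_congr rfl hterm, ← Finset.sum_div, Finset.sum_add_distrib]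
  have hC1 : ∑ r ∈ Finset.Icc 1 (m-1), Real.cos (2*π*(n₁:ℝ)*r/m)
      = if l = k then (m:ℝ) - 1 else -1 := by
    by_cases h : l = k
    · rw [if_pos h, cosSum_Icc_dvd m hm n₁ (by rw [hn₁, h]; simp)]
    · rw [if_neg h]
      apply cosSum_Icc_not m hm
      intro hdvd
      have := Int.eq_zero_of_dvd_of_natAbs_lt_natAbs hdvd (by rw [hn₁]; omega)
      rw [hn₁] at this
      omega
  have hC2 : ∑ r ∈ Finset.Icc 1 (m-1), Real.cos (2*π*(n₂:ℝ)*r/m)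
      = if l = m - k then (m:ℝ) - 1 else -1 := by
    by_cases h : l = m - k
    · rw [if_pos h, cosSum_Icc_dvd m hm n₂ ⟨1, by rw [hn₂]; omega⟩]
    · rw [if_neg h]
      apply cosSum_Icc_not m hm
      intro hdvd
      have h5 : ((m:ℤ)) ∣ (n₂ - m) := dvd_sub hdvd dvd_rfl
      have := Int.eq_zero_of_dvd_of_natAbs_lt_natAbs h5 (by rw [hn₂]; omega)
      rw [hn₂] at this
      omega
  rw [hC1, hC2]
  by_cases h1 : l = k
  · by_cases h2 : l = m - k
    · simp only [if_pos h1, if_pos h2]; ring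
    · simp only [if_pos h1, if_neg h2]; ring
  · by_cases h2 : l = m - k
    · simp only [if_neg h1, if_pos h2]; ring
    · simp only [if_neg h1, if_neg h2]; ring

/-- The digamma function ψ(x) = Γ'(x)/Γ(x). -/
noncomputable def digamma (x : ℝ) : ℝ := deriv Real.Gamma x / Real.Gamma x

theorem stmt12 (m : ℕ) (hm : 2 ≤ m) (k : ℕ) (hk1 : 1 ≤ k) (hk2 : k ≤ m - 1)
    (hGauss : ∀ r : ℕ, 1 ≤ r → r ≤ m - 1 →
      digamma (r / m) =
        -Real.eulerMascheroniConstant - Real.log (2 * m) - (π / 2) * Real.cot (π * r / m)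
          + ∑ l ∈ Finset.Icc 1 (m - 1),
              Real.cos (2 * π * r * l / m) * Real.log (Real.sin (π * l / m))) :
    (∑ r ∈ Finset.Icc 1 (m - 1), digamma (r / m) * Real.cos (2 * π * r * k / m)) =
      m * Real.log (2 * Real.sin (k * π / m)) + Real.eulerMascheroniConstant := by
  have hm0 : (m:ℝ) ≠ 0 := by positivity
  have hmpos : (0:ℝ) < m := by positivity
  set γ := Real.eulerMascheroniConstant with hγ
  set A : ℝ := -γ - Real.log (2 * m) with hA
  -- step 1: rewrite each term
  have hsplit : ∀ r ∈ Finset.Icc 1 (m-1), digamma (r / m) * Real.cos (2 * π * r * k / m)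
      = A * Real.cos (2 * π * r * k / m)
        - (π/2) * (Real.cot (π * r / m) * Real.cos (2 * π * r * k / m))
        + ∑ l ∈ Finset.Icc 1 (m-1),
            (Real.cos (2 * π * r * k / m) * Real.cos (2 * π * r * l / m))
              * Real.log (Real.sin (π * l / m)) := by
    intro r hr
    simp only [Finset.mem_Icc] at hr
    rw [hGauss r hr.1 hr.2, hA, add_mul, Finset.sum_mul]
    congr 1
    · ring
    · exact Finset.sum_congr rfl fun l _ => by ring
  rw [Finset.sum_congr rfl hsplit]
  rw [Finset.sum_add_distrib, Finset.sum_sub_distrib, ← Finset.mul_sum, ← Finset.mul_sum]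
  -- the cosine sum
  have hnd : ¬ (m:ℤ) ∣ (k:ℤ) := by
    intro hdvd
    have := Int.eq_zero_of_dvd_of_natAbs_lt_natAbs hdvd (by omega)
    omega
  have hCk : ∑ r ∈ Finset.Icc 1 (m-1), Real.cos (2 * π * r * k / m) = -1 := by
    rw [← cosSum_Icc_not m hm (k:ℤ) hnd]
    apply Finset.sum_congr rfl
    intro r _
    congr 1
    push_cast
    ring
  -- the cotangent sum
  have hcot := cotSum m k hm
  -- the double sum
  have hdouble : ∑ r ∈ Finset.Icc 1 (m-1), ∑ l ∈ Finset.Icc 1 (m-1),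
      (Real.cos (2 * π * r * k / m) * Real.cos (2 * π * r * l / m))
        * Real.log (Real.sin (π * l / m))
      = -(Real.log m - (m-1 : ℕ) * Real.log 2) + m * Real.log (Real.sin (π * k / m)) := by
    rw [Finset.sum_comm]
    have hinner : ∀ l ∈ Finset.Icc 1 (m-1),
        ∑ r ∈ Finset.Icc 1 (m-1), (Real.cos (2 * π * r * k / m) * Real.cos (2 * π * r * l / m))
          * Real.log (Real.sin (π * l / m))
        = (-1 + (m/2 : ℝ) * (if l = k then 1 else 0) + (m/2 : ℝ) * (if l = m - k then 1 else 0))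
            * Real.log (Real.sin (π * l / m)) := by
      intro l hl
      simp only [Finset.mem_Icc] at hl
      rw [← Finset.sum_mul, Slem m k l hm hk1 hk2 hl.1 hl.2]
    rw [Finset.sum_congr rfl hinner]
    have hexp : ∀ l ∈ Finset.Icc 1 (m-1),
        (-1 + (m/2 : ℝ) * (if l = k then 1 else 0) + (m/2 : ℝ) * (if l = m - k then 1 else 0))
          * Real.log (Real.sin (π * l / m))
        = -Real.log (Real.sin (π * l / m))
          + (if l = k then (m/2 : ℝ) * Real.log (Real.sin (π * l / m)) else 0)
          + (if l = m - k then (m/2 : ℝ) * Real.log (Real.sin (π * l / m)) else 0) := by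
      intro l _
      split_ifs <;> ring
    rw [Finset.sum_congr rfl hexp, Finset.sum_add_distrib, Finset.sum_add_distrib,
      Finset.sum_neg_distrib, sum_log_sin m hm,
      Finset.sum_ite_eq' _ k (fun l => (m/2 : ℝ) * Real.log (Real.sin (π * l / m))),
      Finset.sum_ite_eq' _ (m-k) (fun l => (m/2 : ℝ) * Real.log (Real.sin (π * l / m)))]
    have hkmem : k ∈ Finset.Icc 1 (m-1) := by simp only [Finset.mem_Icc]; omega
    have hmkmem : m - k ∈ Finset.Icc 1 (m-1) := by simp only [Finset.mem_Icc]; omega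
    rw [if_pos hkmem, if_pos hmkmem]
    have hsin_eq : Real.sin (π * (m-k : ℕ) / m) = Real.sin (π * k / m) := by
      have hc : ((m - k : ℕ) : ℝ) = m - k := by
        rw [Nat.cast_sub (by omega)]
      rw [hc]
      have : π * ((m:ℝ) - k) / m = π - π * k / m := by field_simp
      rw [this, Real.sin_pi_sub]
    rw [hsin_eq]
    ring
  rw [hCk, hcot, hdouble]
  -- final arithmetic
  have hsinpos : 0 < Real.sin (π * k / m) := sin_pos_aux m k hm hk1 hk2
  have hlog2m : Real.log (2 * m) = Real.log 2 + Real.log m := Real.log_mul (by norm_num) hm0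
  have hlog2sin : Real.log (2 * Real.sin ((k:ℝ) * π / m)) = Real.log 2 + Real.log (Real.sin (π * k / m)) := by
    have : (k:ℝ) * π / m = π * k / m := by ring
    rw [this, Real.log_mul (by norm_num) (by positivity)]
  rw [hlog2sin, hA, hlog2m, Nat.cast_sub (by omega), Nat.cast_one]
  ring
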